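/- arXiv:1203.0685 — 3 statements merged into one kernel-verified Lean document; each statement's English description precedes it below -/
import Mathlib

section
/- For all integers v ≥ 1, the type I number β(v, 3) equals v + 1. -/
/-- For all integers `v ≥ 1`, the type I number `β(v, 3)` equals `v + 1`. -/
theorem typeI_three_eq_succ
    (β : ℕ → ℕ → ℕ)
    (h1 : ∀ v, β v 1 = 1)
    (h2 : ∀ v, 1 ≤ v → β v 2 = 1)
    (h3 : ∀ r, 3 ≤ r → β 1 r = β 2 (r - 1) + β 1 (r - 1))
    (h4 : ∀ r, 2 ≤ r → β 0 r = β 1 (r - 1))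
    (h5 : ∀ v, 2 ≤ v → ∀ r, 3 ≤ r → β v r = β (v + 1) (r - 1) + β (v - 1) r) :
    ∀ v, 1 ≤ v → β v 3 = v + 1 := by
  intro v hv
  induction v with
  | zero => omega
  | succ n ih =>
    rcases Nat.eq_or_lt_of_le hv with h | h
    · rw [← h, h3 3 le_rfl]
      simp [h2 1 le_rfl, h2 2 (by norm_num)]
    · have hn : 1 ≤ n := by omega
      rw [h5 (n+1) (by omega) 3 le_rfl]
      simp only [Nat.add_sub_cancel]
      rw [h2 (n+2) (by omega), ih hn]; omega
end

section
/- Let G : ℝ → ℝ be a continuous function with 0 ≤ G ≤ 1, let x ≤ z be reals, and for j ≥ 1 define m_j(q, z) = ∫_q^z ((t - q)^{j-1} / (j-1)!) (1 - G(t)) dt. For ν ≥ 0 and j ≥ 1 define h_j^ν(2) = ∫_x^z ∫_p^z ((q - p)^ν / ν!) m_j(q, z) dq dp. Then for all j ≥ 1 and ν ≥ 0, h_j^ν(2) = m_{j+ν+2}(x, z). -/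
open intervalIntegral MeasureTheory

/-- The `n`-th moment-type integral `m_{n+1}(p, z)` (with shifted index):
`mom f z n p = ∫_p^z (t-p)^n / n! * f t dt`. -/
noncomputable def mom (f : ℝ → ℝ) (z : ℝ) (n : ℕ) (p : ℝ) : ℝ :=
  ∫ t in p..z, (t - p) ^ n / (n.factorial : ℝ) * f t

lemma hasDerivAt_lower (g : ℝ → ℝ) (hg : Continuous g) (z q : ℝ) :
    HasDerivAt (fun p => ∫ t in p..z, g t) (-(g q)) q :=
  (intervalIntegral.integral_hasStrictDerivAt_left (hg.intervalIntegrable _ _)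
    (hg.stronglyMeasurableAtFilter _ _) hg.continuousAt).hasDerivAt

lemma pow_div_hasDerivAt (p : ℝ) (ν : ℕ) (q : ℝ) :
    HasDerivAt (fun q => (q - p) ^ (ν + 1) / ((ν + 1).factorial : ℝ))
      ((q - p) ^ ν / (ν.factorial : ℝ)) q := by
  have h : HasDerivAt (fun q : ℝ => (q - p) ^ (ν + 1)) (((ν+1 : ℕ) : ℝ) * (q - p) ^ ν * 1) q := by
    simpa using ((hasDerivAt_id q).sub_const p).fun_pow (ν + 1)
  have h2 : HasDerivAt (fun q : ℝ => (q - p) ^ (ν + 1) / ((ν + 1).factorial : ℝ))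
      (((ν+1 : ℕ) : ℝ) * (q - p) ^ ν * 1 / ((ν + 1).factorial : ℝ)) q :=
    h.div_const ((ν + 1).factorial : ℝ)
  convert h2 using 1
  have hν : (ν.factorial : ℝ) ≠ 0 := Nat.cast_ne_zero.2 ν.factorial_ne_zero
  have hν1 : ((ν+1).factorial : ℝ) ≠ 0 := Nat.cast_ne_zero.2 (ν+1).factorial_ne_zero
  rw [Nat.factorial_succ] at hν1 ⊢
  push_cast
  field_simp

lemma mom_key (f : ℝ → ℝ) (hf : Continuous f) (z : ℝ) (n : ℕ) :
    Continuous (mom f z n) ∧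
    ∀ (ν : ℕ) (p : ℝ),
      (∫ q in p..z, (q - p) ^ ν / (ν.factorial : ℝ) * mom f z n q)
        = mom f z (n + ν + 1) p := by
  induction n with
  | zero =>
    have h0 : mom f z 0 = fun q => ∫ t in q..z, f t := by
      funext q; unfold mom; simp
    have hd : ∀ q, HasDerivAt (mom f z 0) (-(f q)) q := by
      intro q; rw [h0]; exact hasDerivAt_lower f hf z q
    have hc : Continuous (mom f z 0) :=
      continuous_iff_continuousAt.2 fun q => (hd q).continuousAt
    refine ⟨hc, fun ν p => ?_⟩
    have parts := intervalIntegral.integral_mul_deriv_eq_deriv_mul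
      (u := mom f z 0) (u' := fun q => -(f q))
      (v := fun q => (q - p) ^ (ν + 1) / ((ν + 1).factorial : ℝ))
      (v' := fun q => (q - p) ^ ν / (ν.factorial : ℝ)) (a := p) (b := z)
      (fun q _ => hd q) (fun q _ => pow_div_hasDerivAt p ν q)
      ((hf.neg).intervalIntegrable _ _)
      ((by fun_prop : Continuous fun q : ℝ => (q - p) ^ ν / (ν.factorial : ℝ)).intervalIntegrable _ _)
    have hz : mom f z 0 z = 0 := by unfold mom; simp
    have hp : ((p : ℝ) - p) ^ (ν + 1) / ((ν + 1).factorial : ℝ) = 0 := by simp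
    simp only [hz, hp, zero_mul, mul_zero, zero_sub, sub_zero] at parts
    rw [show (∫ q in p..z, (q - p) ^ ν / (ν.factorial : ℝ) * mom f z 0 q)
        = ∫ q in p..z, mom f z 0 q * ((q - p) ^ ν / (ν.factorial : ℝ)) from
      intervalIntegral.integral_congr fun q _ => mul_comm _ _]
    rw [parts]
    unfold mom
    rw [← intervalIntegral.integral_neg]
    exact intervalIntegral.integral_congr fun t _ => by ring
  | succ n ih =>
    obtain ⟨ihc, ihL⟩ := ih
    have hrep : mom f z (n + 1) = fun p => ∫ q in p..z, mom f z n q := by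
      funext p
      rw [show n + 1 = n + 0 + 1 from rfl, ← ihL 0 p]
      exact intervalIntegral.integral_congr fun q _ => by simp
    have hd : ∀ q, HasDerivAt (mom f z (n + 1)) (-(mom f z n q)) q := by
      intro q; rw [hrep]; exact hasDerivAt_lower _ ihc z q
    have hc : Continuous (mom f z (n + 1)) :=
      continuous_iff_continuousAt.2 fun q => (hd q).continuousAt
    refine ⟨hc, fun ν p => ?_⟩
    have parts := intervalIntegral.integral_mul_deriv_eq_deriv_mul
      (u := mom f z (n + 1)) (u' := fun q => -(mom f z n q))
      (v := fun q => (q - p) ^ (ν + 1) / ((ν + 1).factorial : ℝ))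
      (v' := fun q => (q - p) ^ ν / (ν.factorial : ℝ)) (a := p) (b := z)
      (fun q _ => hd q) (fun q _ => pow_div_hasDerivAt p ν q)
      (ihc.neg.intervalIntegrable _ _)
      ((by fun_prop : Continuous fun q : ℝ => (q - p) ^ ν / (ν.factorial : ℝ)).intervalIntegrable _ _)
    have hz : mom f z (n + 1) z = 0 := by unfold mom; simp
    have hp : ((p : ℝ) - p) ^ (ν + 1) / ((ν + 1).factorial : ℝ) = 0 := by simp
    simp only [hz, hp, zero_mul, mul_zero, zero_sub, sub_zero] at parts
    rw [show (∫ q in p..z, (q - p) ^ ν / (ν.factorial : ℝ) * mom f z (n + 1) q)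
        = ∫ q in p..z, mom f z (n + 1) q * ((q - p) ^ ν / (ν.factorial : ℝ)) from
      intervalIntegral.integral_congr fun q _ => mul_comm _ _]
    rw [parts]
    have : (∫ q in p..z, -(-(mom f z n q) * ((q - p) ^ (ν + 1) / ((ν + 1).factorial : ℝ))))
        = ∫ q in p..z, (q - p) ^ (ν + 1) / ((ν + 1).factorial : ℝ) * mom f z n q := by
      rw [← intervalIntegral.integral_neg] at *
      exact intervalIntegral.integral_congr fun q _ => by ring
    rw [← intervalIntegral.integral_neg, this, ihL (ν + 1) p,
      show n + (ν + 1) + 1 = n + 1 + ν + 1 by omega]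

/-- The base case `r = 2` of Lemma 3.1: `h_j^ν(2) = m_{j+ν+2}(x, z)`,
i.e. `β(ν, 2) = 1` for all `ν ≥ 0`, `j ≥ 1`. -/
theorem h_two_eq_moment
    (G : ℝ → ℝ) (hG : Continuous G)
    (hG0 : ∀ t, 0 ≤ G t) (hG1 : ∀ t, G t ≤ 1)
    (x z : ℝ) (hxz : x ≤ z)
    (j ν : ℕ) (hj : 1 ≤ j) :
    (∫ p in x..z, ∫ q in p..z, ((q - p) ^ ν / (ν.factorial : ℝ)) *
        (∫ t in q..z, ((t - q) ^ (j - 1) / ((j - 1).factorial : ℝ)) * (1 - G t)))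
      = ∫ t in x..z,
          ((t - x) ^ (j + ν + 1) / ((j + ν + 1).factorial : ℝ)) * (1 - G t) := by
  have hf : Continuous (fun t => 1 - G t) := continuous_const.sub hG
  obtain ⟨_, hL⟩ := mom_key _ hf z (j - 1)
  obtain ⟨_, hL2⟩ := mom_key _ hf z (j - 1 + ν + 1)
  show (∫ p in x..z, ∫ q in p..z, ((q - p) ^ ν / (ν.factorial : ℝ)) *
      mom (fun t => 1 - G t) z (j - 1) q) = mom (fun t => 1 - G t) z (j + ν + 1) x
  rw [intervalIntegral.integral_congr (fun p _ => hL ν p)]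
  have h2 : (∫ p in x..z, mom (fun t => 1 - G t) z (j - 1 + ν + 1) p)
      = mom (fun t => 1 - G t) z (j - 1 + ν + 1 + 1) x := by
    rw [show j - 1 + ν + 1 + 1 = j - 1 + ν + 1 + 0 + 1 from rfl, ← hL2 0 x]
    exact intervalIntegral.integral_congr fun p _ => by simp
  rw [h2, show j - 1 + ν + 1 + 1 = j + ν + 1 by omega]
end

section
/- For every n ≥ 1, the central binomial coefficient satisfies binom(2n, n) = 2 Σ_{j=1}^{n} C_{j-1} binom(2(n-j), n-j), where C_m denotes the m-th Catalan number. -/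
/-- The Catalan–central-binomial convolution identity:
`binom(2n, n) = 2 ∑_{j=1}^{n} C_{j-1} binom(2(n-j), n-j)` for `n ≥ 1`. -/
theorem centralBinom_catalan_convolution :
    ∀ n, 1 ≤ n →
      Nat.choose (2 * n) n
        = 2 * ∑ j ∈ Finset.Icc 1 n, catalan (j - 1) * Nat.choose (2 * (n - j)) (n - j) := by
  rintro n hn
  obtain ⟨m, rfl⟩ := Nat.exists_eq_add_of_le hn
  -- rewrite the sum over Icc 1 (m+1) as a sum over range (m+1)
  have hsum : ∑ j ∈ Finset.Icc 1 (1 + m), catalan (j - 1) * Nat.choose (2 * (1 + m - j)) (1 + m - j)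
      = ∑ i ∈ Finset.range (m + 1), catalan i * Nat.choose (2 * (m - i)) (m - i) := by
    rw [show (1 + m) = m + 1 by omega]
    rw [show Finset.Icc 1 (m + 1) = Finset.Ico 1 (m + 2) by exact (Finset.Ico_add_one_right_eq_Icc (a := 1) (b := m + 1)).symm,
      Finset.sum_Ico_eq_sum_range]
    apply Finset.sum_congr (by norm_num)
    intro i hi
    simp only [Finset.mem_range] at hi
    congr 2 <;> omega
  rw [hsum]
  have key : ∀ i, Nat.choose (2 * (m - i)) (m - i) = (m - i + 1) * catalan (m - i) := by
    intro i
    rw [succ_mul_catalan_eq_centralBinom, Nat.centralBinom]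
  have hc : Nat.choose (2 * (1 + m)) (1 + m) = (m + 2) * catalan (m + 1) := by
    rw [show 1 + m = m + 1 by omega, succ_mul_catalan_eq_centralBinom, Nat.centralBinom]
  rw [hc]
  simp_rw [key]
  have hrefl := Finset.sum_range_reflect
    (fun i => catalan i * ((m - i + 1) * catalan (m - i))) (m + 1)
  have h2 : 2 * ∑ i ∈ Finset.range (m + 1), catalan i * ((m - i + 1) * catalan (m - i))
      = ∑ i ∈ Finset.range (m + 1), (m + 2) * (catalan i * catalan (m - i)) := by
    rw [two_mul]
    nth_rewrite 1 [← hrefl]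
    rw [← Finset.sum_add_distrib]
    apply Finset.sum_congr rfl
    intro i hi
    simp only [Finset.mem_range] at hi
    have h1 : m + 1 - 1 - i = m - i := by omega
    have h2 : m - (m - i) = i := by omega
    rw [h1, h2, show m + 2 = (i + 1) + (m - i + 1) by omega]
    ring
  rw [h2, ← Finset.mul_sum]
  congr 1
  rw [catalan_succ']
  rw [Finset.Nat.sum_antidiagonal_eq_sum_range_succ (fun x y => catalan x * catalan y) m]
end
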